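/- Let A1 and A2 be RGPC automata with disjoint state sets, each with a unique accepting state distinct from the initial state, where the initial state has only outgoing transitions and the accepting state only incoming transitions. The concatenation automaton A (obtained by adding merged transitions (q, φ∧ψ, q') for each transition (q, φ, a1) into the accepting state of A1 and each transition (i2, ψ, q') out of the initial state of A2) accepts a word w if and only if w can be written as u · L · v (where L is a single label set) such that u·L is accepted by A1 and L·v is accepted by A2. -/

import Mathlib

/-- Propositional formulas over a set of labels (label expressions). -/
inductive LForm (L : Type) where
  | lab : L → LForm L
  | top : LForm L
  | and : LForm L → LForm L → LForm L
  | or : LForm L → LForm L → LForm L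
  | not : LForm L → LForm L

/-- Satisfaction of a label expression by a set of labels: labels in the set are
interpreted as true, all others as false. -/
def LForm.Sat {L : Type} [DecidableEq L] (X : Finset L) : LForm L → Prop
  | .lab l => l ∈ X
  | .top => True
  | .and a b => a.Sat X ∧ b.Sat X
  | .or a b => a.Sat X ∨ b.Sat X
  | .not a => ¬ a.Sat X

/-- An RGPC automaton: disjoint finite sets of node states and edge states, an initial
node state, symbolic transitions labelled by label expressions alternating between node
and edge states, and accepting edge states. -/
structure RGPCA (S L : Type) [DecidableEq S] [DecidableEq L] where
  QN : Finset S
  QE : Finset S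
  disj : Disjoint QN QE
  init : S
  init_mem : init ∈ QN
  Δ : Set (S × LForm L × S)
  Δ_ok : ∀ t ∈ Δ, (t.1 ∈ QN ∧ t.2.2 ∈ QE) ∨ (t.1 ∈ QE ∧ t.2.2 ∈ QN)
  F : Finset S
  F_sub : F ⊆ QE

namespace RGPCA

variable {S L : Type} [DecidableEq S] [DecidableEq L]

/-- `r` is a run of the automaton `A` on the word `w` of label sets: a sequence of
states of length `|w| + 1` starting at the initial state, in which each step uses a
transition whose formula is satisfied by the corresponding label set. -/
def Run (A : RGPCA S L) (w : List (Finset L)) (r : List S) : Prop :=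
  r.length = w.length + 1 ∧ r.head? = some A.init ∧
  ∀ i, i < w.length →
    ∃ φ : LForm L, (r.getD i A.init, φ, r.getD (i + 1) A.init) ∈ A.Δ ∧
      φ.Sat (w.getD i ∅)

/-- `A` accepts the word `w` if some run on `w` ends in an accepting state. -/
def Accepts (A : RGPCA S L) (w : List (Finset L)) : Prop :=
  ∃ r q, A.Run w r ∧ r.getLast? = some q ∧ q ∈ A.F

end RGPCA


lemma rgpca_accepts_iff_fn {S L : Type} [DecidableEq S] [DecidableEq L]
    (A : RGPCA S L) (w : List (Finset L)) :
    A.Accepts w ↔ ∃ f : ℕ → S, f 0 = A.init ∧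
      (∀ i < w.length, ∃ φ : LForm L, (f i, φ, f (i+1)) ∈ A.Δ ∧ φ.Sat (w.getD i ∅)) ∧
      f w.length ∈ A.F := by
  constructor
  · rintro ⟨r, q, ⟨hlen, hhead, hstep⟩, hlast, hqF⟩
    refine ⟨fun i => r.getD i A.init, ?_, hstep, ?_⟩
    · cases r with
      | nil => simp at hhead
      | cons a t => simpa using hhead
    · have h1 : r[w.length]? = some q := by
        rw [List.getLast?_eq_getElem?, hlen, Nat.add_sub_cancel] at hlast
        exact hlast
      simp [List.getD_eq_getElem?_getD, h1, hqF]
  · rintro ⟨f, hf0, hstep, hfF⟩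
    have hget : ∀ i, i < w.length + 1 →
        (List.ofFn (fun j : Fin (w.length + 1) => f j)).getD i A.init = f i := by
      intro i hi
      rw [List.getD_eq_getElem _ _ (by simpa using hi), List.getElem_ofFn]
    refine ⟨List.ofFn (fun j : Fin (w.length + 1) => f j), f w.length,
      ⟨by simp, ?_, ?_⟩, ?_, hfF⟩
    · rw [List.head?_eq_getElem?, List.getElem?_eq_getElem (by simp)]
      simp [List.getElem_ofFn, hf0]
    · intro i hi
      obtain ⟨φ, h1, h2⟩ := hstep i hi
      exact ⟨φ, by rwa [hget i (by omega), hget (i+1) (by omega)], h2⟩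
    · rw [List.getLast?_eq_getElem?, List.length_ofFn, Nat.add_sub_cancel,
        List.getElem?_eq_getElem (by simp), List.getElem_ofFn]

/-- Correctness of the concatenation construction for RGPC automata: let `A1` and `A2`
have disjoint state sets, unique accepting states `a1`, `a2` distinct from their initial
states, initial states with only outgoing and accepting states with only incoming
transitions. If `A` is the concatenation automaton — same states, initial state of `A1`,
accepting state `a2`, and transitions those of `A1` and `A2` together with the merged
transitions `(q, φ ∧ ψ, q')` for `(q, φ, a1) ∈ Δ1` and `(i2, ψ, q') ∈ Δ2` — then `A`
accepts `w` iff `w = u ++ [X] ++ v` where `A1` accepts `u ++ [X]` and `A2` accepts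
`X :: v`. -/
theorem concatAut_accepts_iff {S L : Type} [DecidableEq S] [DecidableEq L]
    (A1 A2 A : RGPCA S L) (a1 a2 : S)
    (hdisj : Disjoint (A1.QN ∪ A1.QE) (A2.QN ∪ A2.QE))
    (hF1 : A1.F = {a1}) (hF2 : A2.F = {a2})
    (ha1 : a1 ≠ A1.init) (ha2 : a2 ≠ A2.init)
    (hout1 : ∀ t ∈ A1.Δ, t.2.2 ≠ A1.init) (hout2 : ∀ t ∈ A2.Δ, t.2.2 ≠ A2.init)
    (hin1 : ∀ t ∈ A1.Δ, t.1 ≠ a1) (hin2 : ∀ t ∈ A2.Δ, t.1 ≠ a2)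
    (hQN : A.QN = A1.QN ∪ A2.QN) (hQE : A.QE = A1.QE ∪ A2.QE)
    (hinit : A.init = A1.init) (hF : A.F = {a2})
    (hΔ : A.Δ = A1.Δ ∪ A2.Δ ∪
      {t | ∃ q φ ψ q', (q, φ, a1) ∈ A1.Δ ∧ (A2.init, ψ, q') ∈ A2.Δ ∧
        t = (q, LForm.and φ ψ, q')}) :
    ∀ w : List (Finset L),
      A.Accepts w ↔
        ∃ (u : List (Finset L)) (X : Finset L) (v : List (Finset L)),
          w = u ++ X :: v ∧ A1.Accepts (u ++ [X]) ∧ A2.Accepts (X :: v) := by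
  have ha1E : a1 ∈ A1.QE := A1.F_sub (hF1 ▸ Finset.mem_singleton_self a1)
  have ha2E : a2 ∈ A2.QE := A2.F_sub (hF2 ▸ Finset.mem_singleton_self a2)
  have hP : ∀ s, s ∈ A1.QN ∪ A1.QE → s ∈ A2.QN ∪ A2.QE → False :=
    fun s h1 h2 => Finset.disjoint_left.mp hdisj h1 h2
  have hmem1 : ∀ p ∈ A1.Δ, p.1 ∈ A1.QN ∪ A1.QE ∧ p.2.2 ∈ A1.QN ∪ A1.QE := by
    intro p hp
    rcases A1.Δ_ok p hp with ⟨h, h'⟩ | ⟨h, h'⟩ <;>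
      exact ⟨Finset.mem_union.mpr (by tauto), Finset.mem_union.mpr (by tauto)⟩
  have hmem2 : ∀ p ∈ A2.Δ, p.1 ∈ A2.QN ∪ A2.QE ∧ p.2.2 ∈ A2.QN ∪ A2.QE := by
    intro p hp
    rcases A2.Δ_ok p hp with ⟨h, h'⟩ | ⟨h, h'⟩ <;>
      exact ⟨Finset.mem_union.mpr (by tauto), Finset.mem_union.mpr (by tauto)⟩
  have hclass : ∀ p ∈ A.Δ, p ∈ A1.Δ ∨ p ∈ A2.Δ ∨
      ∃ q φ ψ q', (q, φ, a1) ∈ A1.Δ ∧ (A2.init, ψ, q') ∈ A2.Δ ∧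
        p = (q, LForm.and φ ψ, q') := by
    intro p hp
    rw [hΔ] at hp
    rcases hp with (h | h) | h
    · exact Or.inl h
    · exact Or.inr (Or.inl h)
    · exact Or.inr (Or.inr h)
  intro w
  rw [rgpca_accepts_iff_fn]
  constructor
  · rintro ⟨f, hf0, hstep, hfF⟩
    rw [hinit] at hf0
    rw [hF, Finset.mem_singleton] at hfF
    have H : ∃ j, f j ∈ A2.QN ∪ A2.QE :=
      ⟨w.length, by rw [hfF]; exact Finset.mem_union_right _ ha2E⟩
    have hkP : f (Nat.find H) ∈ A2.QN ∪ A2.QE := Nat.find_spec H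
    have hkmin : ∀ j, j < Nat.find H → f j ∉ A2.QN ∪ A2.QE := fun j hj => Nat.find_min H hj
    have hk0 : Nat.find H ≠ 0 := by
      intro h
      exact hP _ (Finset.mem_union_left _ A1.init_mem) (by rw [← hf0, ← h]; exact hkP)
    have hkle : Nat.find H ≤ w.length :=
      Nat.find_min' H (by rw [hfF]; exact Finset.mem_union_right _ ha2E)
    obtain ⟨i, hik⟩ : ∃ i, Nat.find H = i + 1 := ⟨Nat.find H - 1, by omega⟩
    rw [hik] at hkP hkmin hkle
    have hiw : i < w.length := by omega
    obtain ⟨φ0, hφ0, hsat0⟩ := hstep i hiw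
    have hmerge : ∃ q φ ψ q', (q, φ, a1) ∈ A1.Δ ∧ (A2.init, ψ, q') ∈ A2.Δ ∧
        (f i, φ0, f (i+1)) = (q, LForm.and φ ψ, q') := by
      rcases hclass _ hφ0 with h | h | h
      · exact absurd ((hmem1 _ h).2) (fun hh => hP _ hh hkP)
      · exact absurd ((hmem2 _ h).1) (hkmin i (by omega))
      · exact h
    obtain ⟨q, φ, ψ, q', hqa1, hiq', heq⟩ := hmerge
    have hq : f i = q := congrArg Prod.fst heq
    have hq' : f (i+1) = q' := congrArg (fun p => p.2.2) heq
    have hφeq : φ0 = LForm.and φ ψ := congrArg (fun p => p.2.1) heq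
    rw [hφeq] at hsat0
    obtain ⟨hsφ, hsψ⟩ := hsat0
    have hstep1 : ∀ j, j < i → ∃ φ', (f j, φ', f (j+1)) ∈ A1.Δ ∧ φ'.Sat (w.getD j ∅) := by
      intro j hj
      obtain ⟨φ', hφ', hs⟩ := hstep j (by omega)
      rcases hclass _ hφ' with h | h | h
      · exact ⟨φ', h, hs⟩
      · exact absurd ((hmem2 _ h).1) (hkmin j (by omega))
      · obtain ⟨qq, φφ, ψψ, qq', _, hq2, heq2⟩ := h
        exfalso
        have h3 : f (j+1) = qq' := congrArg (fun p => p.2.2) heq2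
        exact hkmin (j+1) (by omega) (by rw [h3]; exact (hmem2 _ hq2).2)
    have hP2 : ∀ j, i + 1 ≤ j → j ≤ w.length → f j ∈ A2.QN ∪ A2.QE := by
      intro j hj
      induction j, hj using Nat.le_induction with
      | base => intro _; exact hkP
      | succ j hj ih =>
        intro hjw
        have hfj := ih (by omega)
        obtain ⟨φ', hφ', _⟩ := hstep j (by omega)
        rcases hclass _ hφ' with h | h | h
        · exact absurd ((hmem1 _ h).1) (fun hh => hP _ hh hfj)
        · exact (hmem2 _ h).2
        · obtain ⟨qq, φφ, ψψ, qq', hq1', _, heq2⟩ := h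
          exfalso
          have h1 : f j = qq := congrArg Prod.fst heq2
          exact hP _ (by rw [h1]; exact (hmem1 _ hq1').1) hfj
    have hstep2 : ∀ j, i + 1 ≤ j → j < w.length →
        ∃ ψ', (f j, ψ', f (j+1)) ∈ A2.Δ ∧ ψ'.Sat (w.getD j ∅) := by
      intro j hj hjw
      have hfj := hP2 j hj (by omega)
      obtain ⟨φ', hφ', hs⟩ := hstep j hjw
      rcases hclass _ hφ' with h | h | h
      · exact absurd ((hmem1 _ h).1) (fun hh => hP _ hh hfj)
      · exact ⟨φ', h, hs⟩
      · obtain ⟨qq, φφ, ψψ, qq', hq1', _, heq2⟩ := h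
        exfalso
        have h1 : f j = qq := congrArg Prod.fst heq2
        exact hP _ (by rw [h1]; exact (hmem1 _ hq1').1) hfj
    have htake : (w.take i).length = i := by simp [min_eq_left hiw.le]
    have hword1 : ∀ j, j ≤ i → (w.take i ++ [w.getD i ∅]).getD j ∅ = w.getD j ∅ := by
      intro j hj
      rcases Nat.lt_or_ge j i with hji | hji
      · rw [List.getD_append _ _ _ _ (by omega),
          List.getD_eq_getElem _ _ (by omega), List.getD_eq_getElem _ _ (by omega),
          List.getElem_take]
      · have hji' : j = i := by omega
        subst hji'
        rw [List.getD_append_right _ _ _ _ (by omega), htake, Nat.sub_self,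
          List.getD_cons_zero]
    refine ⟨w.take i, w.getD i ∅, w.drop (i+1), ?_, ?_, ?_⟩
    · conv_lhs => rw [← List.take_append_drop i w]
      rw [List.drop_eq_getElem_cons hiw, List.getD_eq_getElem _ _ hiw]
    · rw [rgpca_accepts_iff_fn]
      have hlen' : (w.take i ++ [w.getD i ∅]).length = i + 1 := by simp [htake]
      refine ⟨fun j => if j ≤ i then f j else a1, by simp [hf0], ?_, ?_⟩
      · intro j hj
        rw [hlen'] at hj
        rcases Nat.lt_or_ge j i with hji | hji
        · obtain ⟨φ', h1, h2⟩ := hstep1 j hji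
          refine ⟨φ', ?_, ?_⟩
          · simp only [if_pos (by omega : j ≤ i), if_pos (by omega : j + 1 ≤ i)]
            exact h1
          · rw [hword1 j (by omega)]; exact h2
        · have hji' : j = i := by omega
          subst hji'
          refine ⟨φ, ?_, ?_⟩
          · simp only [if_pos (le_refl j), if_neg (by omega : ¬ j + 1 ≤ j)]
            rw [hq]; exact hqa1
          · rw [hword1 j le_rfl]; exact hsφ
      · simp only [hlen']
        rw [if_neg (by omega : ¬ i + 1 ≤ i), hF1]
        exact Finset.mem_singleton_self a1
    · rw [rgpca_accepts_iff_fn]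
      have hn : (w.drop (i+1)).length = w.length - (i+1) := by simp
      have hlen2 : (w.getD i ∅ :: w.drop (i+1)).length = (w.length - (i+1)) + 1 := by
        simp [hn]
      refine ⟨fun t => if t = 0 then A2.init else f (i + t), by simp, ?_, ?_⟩
      · intro t ht
        rw [hlen2] at ht
        rcases Nat.eq_zero_or_pos t with rfl | ht0
        · refine ⟨ψ, ?_, ?_⟩
          · simp only [if_pos rfl, if_neg (Nat.one_ne_zero)]
            rw [hq']; exact hiq'
          · rw [List.getD_cons_zero]; exact hsψ
        · obtain ⟨t', rfl⟩ : ∃ t', t = t' + 1 := ⟨t - 1, by omega⟩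
          obtain ⟨ψ', h1, h2⟩ := hstep2 (i + (t'+1)) (by omega) (by omega)
          refine ⟨ψ', ?_, ?_⟩
          · simp only [if_neg (Nat.succ_ne_zero t'), if_neg (Nat.succ_ne_zero (t'+1))]
            have e : i + (t' + 1 + 1) = i + (t'+1) + 1 := by omega
            rw [e]; exact h1
          · have e3 : (w.drop (i+1)).getD t' ∅ = w.getD (i + (t'+1)) ∅ := by
              rw [List.getD_eq_getElem _ _ (by rw [hn]; omega),
                List.getD_eq_getElem _ _ (by omega), List.getElem_drop]
              simp only [show i + 1 + t' = i + (t'+1) from by omega]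
            rw [List.getD_cons_succ, e3]
            exact h2
      · simp only [hlen2]
        rw [if_neg (Nat.succ_ne_zero _)]
        have e : i + (w.length - (i+1) + 1) = w.length := by omega
        rw [e, hfF, hF2]
        exact Finset.mem_singleton_self a2
  · rintro ⟨u, X, v, rfl, hacc1, hacc2⟩
    rw [rgpca_accepts_iff_fn] at hacc1 hacc2
    obtain ⟨f1, h10, h1s, h1F⟩ := hacc1
    obtain ⟨f2, h20, h2s, h2F⟩ := hacc2
    have hml : (u ++ [X]).length = u.length + 1 := by simp
    have hnl : (X :: v).length = v.length + 1 := by simp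
    rw [hml] at h1s h1F
    rw [hnl] at h2s h2F
    rw [hF1, Finset.mem_singleton] at h1F
    rw [hF2, Finset.mem_singleton] at h2F
    have hwl : (u ++ X :: v).length = u.length + v.length + 1 := by simp; omega
    have hwd1 : ∀ j, j < u.length →
        (u ++ X :: v).getD j ∅ = (u ++ [X]).getD j ∅ := by
      intro j hj
      rw [List.getD_append _ _ _ _ hj, List.getD_append _ _ _ _ hj]
    have hwd2 : (u ++ X :: v).getD u.length ∅ = X := by
      rw [List.getD_append_right _ _ _ _ le_rfl, Nat.sub_self, List.getD_cons_zero]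
    have hwd3 : ∀ t, (u ++ X :: v).getD (u.length + t) ∅ = (X :: v).getD t ∅ := by
      intro t
      rw [List.getD_append_right _ _ _ _ (by omega), Nat.add_sub_cancel_left]
    have hu1 : (u ++ [X]).getD u.length ∅ = X := by
      rw [List.getD_append_right _ _ _ _ le_rfl, Nat.sub_self, List.getD_cons_zero]
    refine ⟨fun j => if j ≤ u.length then f1 j else f2 (j - u.length), ?_, ?_, ?_⟩
    · simp only [if_pos (Nat.zero_le _)]
      rw [h10, hinit]
    · intro j hj
      rw [hwl] at hj
      rcases lt_trichotomy j u.length with hjm | hjm | hjm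
      · obtain ⟨φ', h1, h2⟩ := h1s j (by omega)
        refine ⟨φ', ?_, ?_⟩
        · simp only [if_pos (by omega : j ≤ u.length), if_pos (by omega : j + 1 ≤ u.length)]
          rw [hΔ]
          exact Or.inl (Or.inl h1)
        · rw [hwd1 j hjm]; exact h2
      · subst hjm
        obtain ⟨φ', h1, h2⟩ := h1s u.length (by omega)
        obtain ⟨ψ', h3, h4⟩ := h2s 0 (by omega)
        rw [h1F] at h1
        rw [h20] at h3
        refine ⟨LForm.and φ' ψ', ?_, ?_⟩
        · simp only [if_pos (le_refl u.length),
            if_neg (by omega : ¬ u.length + 1 ≤ u.length), Nat.add_sub_cancel_left]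
          rw [hΔ]
          exact Or.inr ⟨f1 u.length, φ', ψ', f2 1, h1, h3, rfl⟩
        · rw [hwd2]
          rw [hu1] at h2
          rw [List.getD_cons_zero] at h4
          exact ⟨h2, h4⟩
      · obtain ⟨t, rfl⟩ : ∃ t, j = u.length + (t + 1) := ⟨j - u.length - 1, by omega⟩
        obtain ⟨ψ', h1, h2⟩ := h2s (t+1) (by omega)
        refine ⟨ψ', ?_, ?_⟩
        · simp only [if_neg (by omega : ¬ u.length + (t+1) ≤ u.length),
            if_neg (by omega : ¬ u.length + (t+1) + 1 ≤ u.length)]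
          have e1 : u.length + (t+1) - u.length = t + 1 := by omega
          have e2 : u.length + (t+1) + 1 - u.length = t + 1 + 1 := by omega
          rw [e1, e2, hΔ]
          exact Or.inl (Or.inr h1)
        · rw [hwd3 (t+1)]; exact h2
    · simp only [hwl]
      rw [if_neg (by omega : ¬ u.length + v.length + 1 ≤ u.length)]
      have e : u.length + v.length + 1 - u.length = v.length + 1 := by omega
      rw [e, h2F, hF]
      exact Finset.mem_singleton_self a2
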